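/- Let G be a group and φ : G → Aut(G) an admissible action. Then the map α : G ⋉ φ(G) → G_φ ⋉ φ(G) defined by (g, θ) ↦ (g, φ(g) ∘ θ) is a group isomorphism, where G ⋉ φ(G) and G_φ ⋉ φ(G) are formed with respect to the natural actions of φ(G) on G and on G_φ. -/
import Mathlib


/-- The deformed multiplication `g₁ ∘_φ g₂ = g₁ · φ(g₁)⁻¹(g₂)`. -/
def dmul {G : Type*} [Group G] (φ : G →* MulAut G) (a b : G) : G :=
  a * (φ a)⁻¹ b

theorem semidirect_iso {G : Type*} [Group G] (φ : G →* MulAut G)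
    (hadm : ∀ g h : G, φ ((φ (g⁻¹)) h) = φ (g⁻¹ * h * g)) :
    ∃ α : G × φ.range ≃ G × φ.range,
      (∀ (g : G) (θ : φ.range),
        (α (g, θ)).1 = g ∧ ((α (g, θ)).2 : MulAut G) = φ g * (θ : MulAut G)) ∧
      ∀ (g₁ g₂ : G) (θ₁ θ₂ : φ.range),
        α (g₁ * (θ₁ : MulAut G) g₂, θ₁ * θ₂) =
          (dmul φ (α (g₁, θ₁)).1
              (((α (g₁, θ₁)).2 : MulAut G) ((α (g₂, θ₂)).1)),
            (α (g₁, θ₁)).2 * (α (g₂, θ₂)).2) := by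
  refine ⟨{
    toFun := fun p => (p.1, ⟨φ p.1, ⟨p.1, rfl⟩⟩ * p.2)
    invFun := fun p => (p.1, (⟨φ p.1, ⟨p.1, rfl⟩⟩ : φ.range)⁻¹ * p.2)
    left_inv := fun p => by simp [mul_assoc]
    right_inv := fun p => by simp [← mul_assoc] }, ?_, ?_⟩
  · intro g θ; exact ⟨rfl, rfl⟩
  · intro g₁ g₂ θ₁ θ₂
    obtain ⟨h, hh⟩ := θ₁.2
    refine Prod.ext ?_ ?_
    · simp [dmul, mul_assoc]
    · have key : φ ((θ₁ : MulAut G) g₂) = (θ₁ : MulAut G) * φ g₂ * (θ₁ : MulAut G)⁻¹ := by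
        have := hadm h⁻¹ g₂
        simp only [inv_inv] at this
        rw [← hh, this]
        simp [map_mul, mul_assoc]
      refine Subtype.ext ?_
      show φ (g₁ * (θ₁ : MulAut G) g₂) * (θ₁ * θ₂ : MulAut G)
          = φ g₁ * (θ₁ : MulAut G) * (φ g₂ * (θ₂ : MulAut G))
      rw [map_mul, key]
      group
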